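/- Let K > 0, let (ξ(t))_{t≥0} be i.i.d. random variables with values in (0,1) such that log₂ ξ(t) ∈ ℤ almost surely, let log₂ N(0) ∈ ℤ, and define N(t+1) = 2N(t) if N(t) < K and N(t+1) = ξ(t)N(t) if N(t) ≥ K. If E[log₂ ξ(1)] = −∞, then N(t) → 0 in probability, i.e. for every x ∈ ℤ, lim_{t→∞} P(log₂ N(t) > x) = 0; nevertheless P( lim_{t→∞} N(t) = 0 ) = 0. -/

import Mathlib

open MeasureTheory ProbabilityTheory Filter Set
open scoped ENNReal NNReal

namespace CrashAux
open Topology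


variable (h l0 : ℤ) (s : ℕ → ℤ)

/-- the integer level process -/
def lev : ℕ → ℤ
  | 0 => l0
  | t+1 => if lev t < h then lev t + 1 else lev t - s t

variable {h l0 s}

lemma lev_zero : lev h l0 s 0 = l0 := rfl

lemma lev_succ_lt {t : ℕ} (ht : lev h l0 s t < h) :
    lev h l0 s (t+1) = lev h l0 s t + 1 := by
  rw [lev, if_pos ht]

lemma lev_succ_ge {t : ℕ} (ht : h ≤ lev h l0 s t) :
    lev h l0 s (t+1) = lev h l0 s t - s t := by
  rw [lev, if_neg (not_lt.2 ht)]

lemma lev_le_max (hs : ∀ t, 1 ≤ s t) : ∀ t : ℕ, lev h l0 s t ≤ max (l0 - t) h := by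
  intro t
  induction t with
  | zero => simp [lev]
  | succ t ih =>
      rcases lt_or_ge (lev h l0 s t) h with hlt | hge
      · rw [lev_succ_lt hlt]
        exact le_max_of_le_right (by omega)
      · rw [lev_succ_ge hge]
        have h1 := hs t
        rcases le_max_iff.1 ih with h2 | h2
        · exact le_max_iff.2 (Or.inl (by push_cast; omega))
        · exact le_max_iff.2 (Or.inr (by omega))

lemma lev_steady (hs : ∀ t, 1 ≤ s t) {t : ℕ} (ht : (l0 - h).toNat ≤ t) :
    lev h l0 s t ≤ h := by
  have h1 := lev_le_max hs (h := h) (l0 := l0) (s := s) t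
  have h2 : l0 - (t:ℤ) ≤ h := by omega
  omega

lemma lev_climb : ∀ (d r : ℕ), (∀ i, i < d → lev h l0 s (r+i) < h) →
    lev h l0 s (r+d) = lev h l0 s r + d := by
  intro d
  induction d with
  | zero => intro r _; simp
  | succ d ih =>
      intro r hno
      have h1 : lev h l0 s (r+d) = lev h l0 s r + d :=
        ih r (fun i hi => hno i (by omega))
      have h2 : lev h l0 s (r+d) < h := hno d (by omega)
      have h3 : r + (d+1) = (r+d) + 1 := by omega
      rw [h3, lev_succ_lt h2, h1]
      push_cast; ring

lemma lev_climb_auto : ∀ (d r : ℕ), lev h l0 s r + d ≤ h →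
    lev h l0 s (r+d) = lev h l0 s r + d := by
  intro d
  induction d with
  | zero => intro r _; simp
  | succ d ih =>
      intro r hle
      have h1 : lev h l0 s (r+d) = lev h l0 s r + d := ih r (by push_cast at hle ⊢; omega)
      have h2 : lev h l0 s (r+d) < h := by push_cast at hle; omega
      have h3 : r + (d+1) = (r+d) + 1 := by omega
      rw [h3, lev_succ_lt h2, h1]
      push_cast; ring

/-- within a cycle after a crash from level exactly `h`, levels stay `< h` -/
lemma lev_cycle_mid {j : ℕ} (hj : lev h l0 s j = h) (d : ℕ) (hd : (d:ℤ) ≤ s j) :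
    lev h l0 s (j + 1 + d) = h - s j + d := by
  have h1 : lev h l0 s (j+1) = h - s j := by rw [lev_succ_ge (le_of_eq hj.symm), hj]
  have h2 := lev_climb_auto (h := h) (l0 := l0) (s := s) d (j+1) (by rw [h1]; omega)
  rw [h2, h1]

lemma lev_cycle_end {j : ℕ} (hj : lev h l0 s j = h) (hsj : 1 ≤ s j) :
    lev h l0 s (j + 1 + (s j).toNat) = h := by
  have h1 := lev_cycle_mid (h := h) (l0 := l0) (s := s) hj (s j).toNat (by omega)
  rw [h1]; omega

lemma lev_no_crash_between {j : ℕ} (hj : lev h l0 s j = h) {i : ℕ}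
    (hi0 : 0 < i) (hi : (i:ℤ) < 1 + s j) : lev h l0 s (j + i) < h := by
  obtain ⟨d, rfl⟩ : ∃ d, i = 1 + d := ⟨i - 1, by omega⟩
  have h1 := lev_cycle_mid (h := h) (l0 := l0) (s := s) hj d (by push_cast at hi; omega)
  have h2 : j + (1 + d) = j + 1 + d := by omega
  rw [h2, h1]
  push_cast at hi; omega

lemma lev_target (hs : ∀ t, 1 ≤ s t) {t : ℕ} (ht : (l0 - h).toNat ≤ t) {x : ℤ}
    (hx : x < lev h l0 s t) :
    ∃ i : ℕ, (i:ℤ) < h - x ∧ lev h l0 s (t + i) = h := by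
  have hle : lev h l0 s t ≤ h := lev_steady hs ht
  refine ⟨(h - lev h l0 s t).toNat, by omega, ?_⟩
  have h1 := lev_climb_auto (h := h) (l0 := l0) (s := s) (h - lev h l0 s t).toNat t (by omega)
  rw [h1]; omega

lemma lev_last_crash_unique (hs : ∀ t, 1 ≤ s t) {j j' : ℕ} (hj : (l0 - h).toNat ≤ j)
    (hjj : j < j') (hjs : (j':ℤ) - j ≤ s j)
    (hcr : h ≤ lev h l0 s j) (hcr' : h ≤ lev h l0 s j') : False := by
  have hj_eq : lev h l0 s j = h := le_antisymm (lev_steady hs hj) hcr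
  have h1 : lev h l0 s (j + (j' - j)) < h :=
    lev_no_crash_between (h := h) (l0 := l0) (s := s) hj_eq (by omega) (by push_cast; omega)
  have hh : j + (j' - j) = j' := by omega
  rw [hh] at h1; omega

lemma lev_renewal_mem (hs : ∀ t, 1 ≤ s t) {j n : ℕ} (hj : (l0 - h).toNat ≤ j) (hj2 : j + 2 ≤ n)
    (hcr : h ≤ lev h l0 s j) (hsj : s j = (n:ℤ) - 1 - j) : h ≤ lev h l0 s n := by
  have hj_eq : lev h l0 s j = h := le_antisymm (lev_steady hs hj) hcr
  have h1 := lev_cycle_end (h := h) (l0 := l0) (s := s) hj_eq (by omega)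
  have hh : j + 1 + (s j).toNat = n := by omega
  rw [hh] at h1; omega

lemma lev_backward (hs : ∀ t, 1 ≤ s t) {n : ℕ} (hn : (l0 - h).toNat + 2 ≤ n)
    (hcr : h ≤ lev h l0 s n) :
    (∃ j, (l0 - h).toNat ≤ j ∧ j + 2 ≤ n ∧ h ≤ lev h l0 s j ∧ s j = (n:ℤ) - 1 - j) ∨
    (∃ j, j < (l0 - h).toNat ∧ h ≤ lev h l0 s j ∧ (n:ℤ) - (l0 - h).toNat ≤ s j) ∨
    ((n:ℤ) = h - l0) := by
  classical
  set T0 := (l0 - h).toNat with hT0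
  by_cases hex : ∃ j₀, j₀ < n ∧ h ≤ lev h l0 s j₀
  · obtain ⟨j₀, hj₀n, hj₀⟩ := hex
    set P : ℕ → Prop := fun j => h ≤ lev h l0 s j with hPdef
    set j := Nat.findGreatest P (n-1) with hjdef
    have hPj : P j := Nat.findGreatest_spec (P := P) (m := j₀) (by omega) hj₀
    have hjn : j ≤ n - 1 := Nat.findGreatest_le _
    have hgr : ∀ k, j < k → k < n → ¬ P k := fun k hk1 hk2 =>
      Nat.findGreatest_is_greatest hk1 (by omega)
    -- no crash in (j, n), so the level climbs from j+1 to n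
    have hclimb : lev h l0 s (j + 1 + (n - 1 - j)) = lev h l0 s (j+1) + ((n - 1 - j : ℕ) : ℤ) := by
      apply lev_climb
      intro i hi
      have := hgr (j + 1 + i) (by omega) (by omega)
      simpa [hPdef] using this
    have hidx : j + 1 + (n - 1 - j) = n := by omega
    have hcast : ((n - 1 - j : ℕ) : ℤ) = (n:ℤ) - 1 - j := by omega
    have hlevn : lev h l0 s n = lev h l0 s j - s j + ((n:ℤ) - 1 - j) := by
      rw [hidx, hcast] at hclimb
      rw [hclimb, lev_succ_ge hPj]
    have hlevn_le : lev h l0 s n ≤ h := lev_steady hs (by omega)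
    have hlevn_eq : lev h l0 s n = h := by omega
    rcases le_or_gt T0 j with hjT | hjT
    · -- last crash in steady regime
      have hj_eq : lev h l0 s j = h := le_antisymm (lev_steady hs hjT) hPj
      have hsj : s j = (n:ℤ) - 1 - j := by omega
      have hj2 : j + 2 ≤ n := by
        have := hs j; omega
      exact Or.inl ⟨j, hjT, hj2, hPj, hsj⟩
    · refine Or.inr (Or.inl ⟨j, hjT, hPj, ?_⟩)
      have : h ≤ lev h l0 s j := hPj
      omega
  · -- no crash before n at all: pure climb from 0
    push_neg at hex
    have hclimb : lev h l0 s (0 + n) = lev h l0 s 0 + n := by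
      apply lev_climb
      intro i hi
      exact lt_of_not_ge (by simpa using hex i (by omega))
    simp only [Nat.zero_add, lev_zero] at hclimb
    have hlevn_le : lev h l0 s n ≤ h := lev_steady hs (by omega)
    exact Or.inr (Or.inr (by omega))




lemma renewal_tendsto_zero (f F u δ : ℕ → ℝ) (T0 : ℕ)
    (hf0 : ∀ i, 0 ≤ f i) (hf00 : f 0 = 0) (hfsum : Summable f) (hftot : ∑' i, f i = 1)
    (hu0 : ∀ n, 0 ≤ u n) (hu1 : ∀ n, u n ≤ 1)
    (hF0 : ∀ k, 0 ≤ F k) (hFanti : Antitone F) (hFdiv : ¬ Summable F)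
    (hδ : Tendsto δ atTop (𝓝 0))
    (hren : ∀ n, T0 + 2 ≤ n → |u n - ∑ j ∈ Finset.Ico T0 (n-1), u j * f (n-1-j)| ≤ δ n)
    (hlast : ∀ t, ∑ j ∈ Finset.Ico T0 (t-1), u j * F (t-2-j) ≤ 1) :
    Tendsto u atTop (𝓝 0) := by
  classical
  have hbdd : IsBoundedUnder (· ≤ ·) atTop u := isBoundedUnder_of ⟨1, fun n => hu1 n⟩
  have hbdd' : IsBoundedUnder (· ≥ ·) atTop u := isBoundedUnder_of ⟨0, fun n => hu0 n⟩
  have hcob : IsCoboundedUnder (· ≤ ·) atTop u := hbdd'.isCoboundedUnder_le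
  set β : ℝ := limsup u atTop with hβdef
  have hβ0 : 0 ≤ β := le_limsup_of_frequently_le (Frequently.of_forall hu0) hbdd
  have hβ1 : β ≤ 1 := limsup_le_of_le hcob (Eventually.of_forall hu1)
  rcases eq_or_lt_of_le hβ0 with hβeq | hβpos
  · -- β = 0 : conclude
    have hlinf : liminf u atTop = 0 := by
      have h1 : 0 ≤ liminf u atTop := le_liminf_of_le hbdd.isCoboundedUnder_ge (Eventually.of_forall hu0)
      have h2 : liminf u atTop ≤ β := liminf_le_limsup hbdd hbdd'
      linarith
    exact tendsto_of_liminf_eq_limsup hlinf hβeq.symm hbdd hbdd'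
  -- main case: 0 < β, derive a contradiction
  exfalso
  -- extraction of a subsequence converging to β
  have hfreq : ∀ k : ℕ, ∃ᶠ n in atTop, |u n - β| < 1/(k+1) := by
    intro k
    have hk : (0:ℝ) < 1/(k+1) := by positivity
    have h1 : ∃ᶠ n in atTop, β - 1/(k+1) < u n :=
      frequently_lt_of_lt_limsup hcob (by linarith)
    have h2 : ∀ᶠ n in atTop, u n < β + 1/(k+1) :=
      eventually_lt_of_limsup_lt (by linarith) hbdd
    exact (h1.and_eventually h2).mono fun n hn => abs_lt.2 ⟨by linarith [hn.1], by linarith [hn.2]⟩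
  obtain ⟨φ0, hφ0mono, hφ0⟩ := extraction_forall_of_frequently hfreq
  have hφ0lim : Tendsto (fun k => u (φ0 k)) atTop (𝓝 β) := by
    have h1 : Tendsto (fun k : ℕ => (1:ℝ)/(k+1)) atTop (𝓝 0) :=
      tendsto_one_div_add_atTop_nhds_zero_nat
    have h2 : Tendsto (fun k => u (φ0 k) - β) atTop (𝓝 0) :=
      squeeze_zero_norm (fun k => le_of_lt (hφ0 k)) h1
    simpa using h2.add_const β
  -- diagonal extraction via compactness of [0,1]^ℕ
  set e : ℕ → (ℕ → ℝ) := fun k j => u (φ0 k - j) with hedef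
  have hcomp : IsCompact (Set.pi Set.univ fun _ : ℕ => Set.Icc (0:ℝ) 1) :=
    isCompact_univ_pi fun _ => isCompact_Icc
  have hemem : ∀ k, e k ∈ Set.pi Set.univ fun _ : ℕ => Set.Icc (0:ℝ) 1 := by
    intro k; intro j _; exact ⟨hu0 _, hu1 _⟩
  obtain ⟨v, hvmem, ψ, hψmono, hψlim⟩ := hcomp.tendsto_subseq hemem
  set σ : ℕ → ℕ := fun k => φ0 (ψ k) with hσdef
  have hσmono : StrictMono σ := hφ0mono.comp hψmono
  have hvj : ∀ j, Tendsto (fun k => u (σ k - j)) atTop (𝓝 (v j)) := by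
    intro j
    have := (tendsto_pi_nhds.1 hψlim) j
    simpa [hedef, Function.comp, hσdef] using this
  have hσtop : ∀ j : ℕ, Tendsto (fun k => σ k - j) atTop atTop := by
    intro j
    apply tendsto_atTop_atTop.2
    intro b
    exact ⟨b + j, fun k hk => by have h5 : k ≤ σ k := hσmono.le_apply; omega⟩
  have hv0 : v 0 = β := by
    have h1 : Tendsto (fun k => u (σ k - 0)) atTop (𝓝 β) := by
      simpa [hσdef, Function.comp_def] using hφ0lim.comp hψmono.tendsto_atTop
    exact tendsto_nhds_unique (hvj 0) h1
  have hvle : ∀ j, v j ≤ β := by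
    intro j
    refine le_of_forall_pos_le_add ?_
    intro ε hε
    have h2 : ∀ᶠ n in atTop, u n < β + ε := eventually_lt_of_limsup_lt (by linarith) hbdd
    have h3 : ∀ᶠ k in atTop, u (σ k - j) < β + ε := (hσtop j).eventually h2
    exact le_of_tendsto (hvj j) (h3.mono fun k hk => le_of_lt hk)
  have hv0' : ∀ j, 0 ≤ v j := fun j => ge_of_tendsto (hvj j) (Eventually.of_forall fun k => hu0 _)
  -- harmonic equation
  have hharm : ∀ j, v j = ∑' i, f i * v (j + 1 + i) := by
    intro j
    set g : ℕ → ℕ → ℝ := fun k i =>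
      if 1 ≤ i ∧ i ≤ σ k - j - 1 - T0 then f i * u (σ k - j - 1 - i) else 0 with hgdef
    have hgbound : ∀ k i, ‖g k i‖ ≤ f i := by
      intro k i
      rw [hgdef]
      dsimp only
      split_ifs with hcond
      · rw [Real.norm_eq_abs, abs_of_nonneg (mul_nonneg (hf0 i) (hu0 _))]
        calc f i * u (σ k - j - 1 - i) ≤ f i * 1 := by
              exact mul_le_mul_of_nonneg_left (hu1 _) (hf0 i)
          _ = f i := mul_one _
      · simpa using hf0 i
    have hgpt : ∀ i, Tendsto (fun k => g k i) atTop (𝓝 (f i * v (j + 1 + i))) := by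
      intro i
      rcases Nat.eq_zero_or_pos i with rfl | hi
      · simpa [hgdef, hf00] using tendsto_const_nhds
      · have hev : (fun k => g k i) =ᶠ[atTop] (fun k => f i * u (σ k - (j + 1 + i))) := by
          have := (hσtop (j + 1 + i + T0)).eventually (eventually_ge_atTop 1)
          filter_upwards [this] with k hk
          rw [hgdef]
          dsimp only
          rw [if_pos (by omega)]
          congr 1
          congr 1
          omega
        have hlim : Tendsto (fun k => f i * u (σ k - (j + 1 + i))) atTop
            (𝓝 (f i * v (j + 1 + i))) := (hvj (j + 1 + i)).const_mul (f i)
        exact hlim.congr' hev.symm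
    have hB : Tendsto (fun k => ∑' i, g k i) atTop (𝓝 (∑' i, f i * v (j + 1 + i))) :=
      tendsto_tsum_of_dominated_convergence hfsum hgpt (Eventually.of_forall hgbound)
    -- identify ∑' i, g k i with the renewal finite sum, for large k
    have hgen : ∀ n : ℕ, T0 + 2 ≤ n →
        (∑' i : ℕ, (if 1 ≤ i ∧ i ≤ n - 1 - T0 then f i * u (n - 1 - i) else 0))
          = ∑ j' ∈ Finset.Ico T0 (n - 1), u j' * f (n - 1 - j') := by
      intro n hn
      rw [tsum_eq_sum (s := Finset.Icc 1 (n - 1 - T0))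
        (fun i hi => if_neg (by simp only [Finset.mem_Icc] at hi; omega))]
      have h2 : ∑ i ∈ Finset.Icc 1 (n - 1 - T0),
          (if 1 ≤ i ∧ i ≤ n - 1 - T0 then f i * u (n - 1 - i) else 0)
          = ∑ i ∈ Finset.Icc 1 (n - 1 - T0), f i * u (n - 1 - i) := by
        apply Finset.sum_congr rfl
        intro i hi
        simp only [Finset.mem_Icc] at hi
        rw [if_pos (by omega)]
      rw [h2]
      refine Finset.sum_nbij' (i := fun i => n - 1 - i) (j := fun j' => n - 1 - j')
        ?_ ?_ ?_ ?_ ?_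
      · intro i hi
        simp only [Finset.mem_Icc] at hi
        simp only [Finset.mem_Ico]
        omega
      · intro j' hj'
        simp only [Finset.mem_Ico] at hj'
        simp only [Finset.mem_Icc]
        omega
      · intro i hi
        simp only [Finset.mem_Icc] at hi
        show n - 1 - (n - 1 - i) = i
        omega
      · intro j' hj'
        simp only [Finset.mem_Ico] at hj'
        show n - 1 - (n - 1 - j') = j'
        omega
      · intro i hi
        simp only [Finset.mem_Icc] at hi
        show f i * u (n - 1 - i) = u (n - 1 - i) * f (n - 1 - (n - 1 - i))
        rw [show n - 1 - (n - 1 - i) = i from by omega, mul_comm]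
    have hSeq : (fun k => ∑' i, g k i) =ᶠ[atTop]
        (fun k => ∑ j' ∈ Finset.Ico T0 (σ k - j - 1), u j' * f (σ k - j - 1 - j')) := by
      filter_upwards [(hσtop j).eventually (eventually_ge_atTop (T0 + 2))] with k hk
      simpa only [hgdef] using hgen (σ k - j) hk
    have hA : Tendsto (fun k => ∑ j' ∈ Finset.Ico T0 (σ k - j - 1), u j' * f (σ k - j - 1 - j'))
        atTop (𝓝 (v j)) := by
      have h1 : Tendsto (fun k => u (σ k - j)) atTop (𝓝 (v j)) := hvj j
      have h2 : Tendsto (fun k => δ (σ k - j)) atTop (𝓝 0) := hδ.comp (hσtop j)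
      have h3 : ∀ᶠ k in atTop,
          ‖u (σ k - j) - ∑ j' ∈ Finset.Ico T0 (σ k - j - 1), u j' * f (σ k - j - 1 - j')‖
            ≤ δ (σ k - j) := by
        have := (hσtop j).eventually (eventually_ge_atTop (T0 + 2))
        filter_upwards [this] with k hk
        exact hren _ hk
      have h4 : Tendsto (fun k => u (σ k - j)
          - ∑ j' ∈ Finset.Ico T0 (σ k - j - 1), u j' * f (σ k - j - 1 - j')) atTop (𝓝 0) :=
        squeeze_zero_norm' h3 h2
      have h5 := h1.sub h4
      simpa using h5
    exact tendsto_nhds_unique (hA.congr' hSeq.symm) hB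
  -- find an atom of f
  obtain ⟨a, hfa⟩ : ∃ a, 0 < f a := by
    by_contra hno
    push_neg at hno
    have : ∀ i, f i = 0 := fun i => le_antisymm (hno i) (hf0 i)
    rw [tsum_congr (fun i => this i)] at hftot
    simp at hftot
  have ha1 : 1 ≤ a := by
    rcases Nat.eq_zero_or_pos a with rfl | h
    · rw [hf00] at hfa; exact absurd hfa (lt_irrefl 0)
    · exact h
  have hsummv : ∀ j, Summable (fun i => f i * v (j + 1 + i)) := by
    intro j
    apply Summable.of_nonneg_of_le (fun i => mul_nonneg (hf0 i) (hv0' _))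
      (fun i => ?_) hfsum
    calc f i * v (j+1+i) ≤ f i * 1 :=
          mul_le_mul_of_nonneg_left (le_trans (hvle _) hβ1) (hf0 i)
      _ = f i := mul_one _
  -- propagation along multiples of (1+a)
  have hprop : ∀ c : ℕ, v (c * (1 + a)) = β := by
    intro c
    induction c with
    | zero => simpa using hv0
    | succ c ih =>
        set j := c * (1 + a) with hjdef
        have heq : v j = ∑' i, f i * v (j + 1 + i) := hharm j
        have hsum2 : Summable (fun i => f i * (β - v (j + 1 + i))) := by
          have : (fun i => f i * (β - v (j + 1 + i)))
              = (fun i => f i * β - f i * v (j + 1 + i)) := by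
            funext i; ring
          rw [this]
          exact (hfsum.mul_right β).sub (hsummv j)
        have hzero : ∑' i, f i * (β - v (j + 1 + i)) = 0 := by
          have h1 : (fun i => f i * (β - v (j + 1 + i)))
              = (fun i => f i * β - f i * v (j + 1 + i)) := by funext i; ring
          rw [h1, Summable.tsum_sub (hfsum.mul_right β) (hsummv j), tsum_mul_right, hftot, one_mul,
            ← heq, ih]
          ring
        have hterm : f a * (β - v (j + 1 + a)) = 0 := by
          have hle : f a * (β - v (j + 1 + a)) ≤ 0 := by
            rw [← hzero]
            exact Summable.le_tsum hsum2 a fun b _ =>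
              mul_nonneg (hf0 b) (by linarith [hvle (j + 1 + b)])
          have hge : 0 ≤ f a * (β - v (j + 1 + a)) :=
            mul_nonneg (hf0 a) (by linarith [hvle (j + 1 + a)])
          linarith
        have hva : v (j + 1 + a) = β := by
          rcases mul_eq_zero.1 hterm with h | h
          · exact absurd h (ne_of_gt hfa)
          · linarith
        have hidx : (c + 1) * (1 + a) = j + 1 + a := by rw [hjdef]; ring
        rw [hidx, hva]
  -- key bound : partial sums of F along multiples of (1+a) are bounded
  have hkey : ∀ M : ℕ, ∑ c ∈ Finset.range M, F (c * (1 + a)) ≤ 1 / β := by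
    intro M
    have hsum_le : ∀ᶠ k in atTop,
        ∑ c ∈ Finset.range M, u (σ k - c * (1 + a)) * F (c * (1 + a)) ≤ 1 := by
      have := (hσtop 0).eventually (eventually_ge_atTop (T0 + M * (1 + a) + 2))
      filter_upwards [this] with k hk
      have hkbig : T0 + M * (1 + a) + 2 ≤ σ k := by omega
      have himg : ∑ c ∈ Finset.range M, u (σ k - c * (1 + a)) * F (c * (1 + a))
          = ∑ j' ∈ (Finset.range M).image (fun c => σ k - c * (1 + a)),
              u j' * F (σ k - j') := by
        rw [Finset.sum_image]
        · apply Finset.sum_congr rfl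
          intro c hc
          rw [Finset.mem_range] at hc
          congr 2
          have : c * (1 + a) ≤ M * (1 + a) := Nat.mul_le_mul_right _ (by omega)
          omega
        · intro c1 h1 c2 h2 hcc
          simp only [Finset.coe_range, Set.mem_Iio] at h1 h2
          have b1 : c1 * (1 + a) ≤ M * (1 + a) := Nat.mul_le_mul_right _ (by omega)
          have b2 : c2 * (1 + a) ≤ M * (1 + a) := Nat.mul_le_mul_right _ (by omega)
          have : c1 * (1 + a) = c2 * (1 + a) := by simp only at hcc; omega
          exact Nat.eq_of_mul_eq_mul_right (by omega) this
      rw [himg]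
      have hsubset : (Finset.range M).image (fun c => σ k - c * (1 + a))
          ⊆ Finset.Ico T0 (σ k + 2 - 1) := by
        intro j' hj'
        rw [Finset.mem_image] at hj'
        obtain ⟨c, hc, rfl⟩ := hj'
        rw [Finset.mem_range] at hc
        rw [Finset.mem_Ico]
        have : c * (1 + a) ≤ M * (1 + a) := Nat.mul_le_mul_right _ (by omega)
        omega
      calc ∑ j' ∈ (Finset.range M).image (fun c => σ k - c * (1 + a)), u j' * F (σ k - j')
          ≤ ∑ j' ∈ Finset.Ico T0 (σ k + 2 - 1), u j' * F (σ k - j') := by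
            apply Finset.sum_le_sum_of_subset_of_nonneg hsubset
            intro j' _ _
            exact mul_nonneg (hu0 _) (hF0 _)
        _ = ∑ j' ∈ Finset.Ico T0 (σ k + 2 - 1), u j' * F (σ k + 2 - 2 - j') := by
            apply Finset.sum_congr rfl
            intro j' hj'
            congr 2
        _ ≤ 1 := hlast (σ k + 2)
    have htend : Tendsto (fun k => ∑ c ∈ Finset.range M, u (σ k - c * (1 + a)) * F (c * (1 + a)))
        atTop (𝓝 (∑ c ∈ Finset.range M, β * F (c * (1 + a)))) := by
      apply tendsto_finset_sum
      intro c _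
      have := (hvj (c * (1 + a))).mul_const (F (c * (1 + a)))
      rwa [hprop c] at this
    have hfin : ∑ c ∈ Finset.range M, β * F (c * (1 + a)) ≤ 1 := le_of_tendsto htend hsum_le
    rw [← Finset.mul_sum] at hfin
    rw [le_div_iff₀ hβpos]
    linarith [hfin]
  have hsubsum : Summable (fun c => F (c * (1 + a))) :=
    summable_of_sum_range_le (fun c => hF0 _) hkey
  -- F itself is summable: contradiction
  apply hFdiv
  have hblock : ∀ M : ℕ, ∑ n ∈ Finset.range (M * (1 + a)), F n
      ≤ (1 + a : ℕ) * ∑ c ∈ Finset.range M, F (c * (1 + a)) := by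
    intro M
    induction M with
    | zero => simp
    | succ M ih =>
        have hsplit : ∑ n ∈ Finset.range ((M + 1) * (1 + a)), F n
            = ∑ n ∈ Finset.range (M * (1 + a)), F n
              + ∑ n ∈ Finset.Ico (M * (1 + a)) ((M + 1) * (1 + a)), F n := by
          rw [Finset.range_eq_Ico, Finset.range_eq_Ico]
          exact (Finset.sum_Ico_consecutive F (Nat.zero_le (M * (1 + a)))
            (Nat.mul_le_mul_right (1 + a) (by omega))).symm
        have hchunk : ∑ n ∈ Finset.Ico (M * (1 + a)) ((M + 1) * (1 + a)), F n
            ≤ (1 + a : ℕ) * F (M * (1 + a)) := by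
          have hcard : (Finset.Ico (M * (1 + a)) ((M + 1) * (1 + a))).card = 1 + a := by
            rw [Nat.card_Ico]
            have : (M + 1) * (1 + a) = M * (1 + a) + (1 + a) := by ring
            omega
          calc ∑ n ∈ Finset.Ico (M * (1 + a)) ((M + 1) * (1 + a)), F n
              ≤ ∑ _n ∈ Finset.Ico (M * (1 + a)) ((M + 1) * (1 + a)), F (M * (1 + a)) := by
                apply Finset.sum_le_sum
                intro n hn
                rw [Finset.mem_Ico] at hn
                exact hFanti hn.1
            _ = (1 + a : ℕ) * F (M * (1 + a)) := by
                rw [Finset.sum_const, hcard, nsmul_eq_mul]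
        calc ∑ n ∈ Finset.range ((M + 1) * (1 + a)), F n
            = ∑ n ∈ Finset.range (M * (1 + a)), F n
              + ∑ n ∈ Finset.Ico (M * (1 + a)) ((M + 1) * (1 + a)), F n := hsplit
          _ ≤ (1 + a : ℕ) * ∑ c ∈ Finset.range M, F (c * (1 + a))
              + (1 + a : ℕ) * F (M * (1 + a)) := add_le_add ih hchunk
          _ = (1 + a : ℕ) * ∑ c ∈ Finset.range (M + 1), F (c * (1 + a)) := by
              rw [Finset.sum_range_succ, mul_add]
              congr 2
              ring
  apply summable_of_sum_range_le (c := (1 + a : ℕ) * (1 / β)) hF0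
  intro M
  calc ∑ n ∈ Finset.range M, F n ≤ ∑ n ∈ Finset.range (M * (1 + a)), F n := by
        apply Finset.sum_le_sum_of_subset_of_nonneg
        · apply Finset.range_subset_range.2
          calc M = M * 1 := (mul_one M).symm
            _ ≤ M * (1 + a) := Nat.mul_le_mul_left _ (by omega)
        · intro n _ _; exact hF0 n
    _ ≤ (1 + a : ℕ) * ∑ c ∈ Finset.range M, F (c * (1 + a)) := hblock M
    _ ≤ (1 + a : ℕ) * (1 / β) := by
        apply mul_le_mul_of_nonneg_left (hkey M)
        positivity


end CrashAux

open CrashAux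

/-- the geometric-growth-with-random-crashes model. If the crash sizes
satisfy `E[log₂ ξ(1)] = −∞` (equivalently, `log₂ ξ(1)` is not integrable, as
`ξ(t) ∈ (0,1)`), then `N(t) → 0` in probability, yet the event
`{lim_{t→∞} N(t) = 0}` has probability zero. -/
theorem crash_model_null_recurrence
    {Ω : Type} [MeasurableSpace Ω]
    (Pm : Measure Ω) [IsProbabilityMeasure Pm]
    (K : ℝ) (hK : 0 < K)
    (ξ : ℕ → Ω → ℝ)
    (hmeas : ∀ t, Measurable (ξ t))
    (hindep : iIndepFun ξ Pm)
    (hident : ∀ t, Pm.map (ξ t) = Pm.map (ξ 0))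
    (hval : ∀ t ω, ξ t ω ∈ Set.Ioo (0:ℝ) 1)
    (hintlog : ∀ t, ∀ᵐ ω ∂Pm, ∃ m : ℤ, Real.logb 2 (ξ t ω) = (m : ℝ))
    (N0 : ℝ) (hN0pos : 0 < N0) (hN0 : ∃ m : ℤ, Real.logb 2 N0 = (m : ℝ))
    (N : Ω → ℕ → ℝ)
    (hN0' : ∀ ω, N ω 0 = N0)
    (hNrec : ∀ ω t, N ω (t+1) = if N ω t < K then 2 * N ω t else ξ t ω * N ω t)
    (hE : ¬ Integrable (fun ω => Real.logb 2 (ξ 0 ω)) Pm) :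
    (∀ x : ℤ, Tendsto (fun t => Pm {ω | (x : ℝ) < Real.logb 2 (N ω t)}) atTop (nhds 0)) ∧
    Pm {ω | Tendsto (fun t => N ω t) atTop (nhds 0)} = 0 := by

  classical
  obtain ⟨l0, hl0⟩ := hN0
  -- PART 2 first : the event of convergence to 0 is empty
  have hNpos : ∀ ω t, 0 < N ω t := by
    intro ω t
    induction t with
    | zero => rw [hN0']; exact hN0pos
    | succ t ih =>
        rw [hNrec]
        split_ifs
        · linarith
        · exact mul_pos (hval t ω).1 ih
  have hpart2 : {ω | Tendsto (fun t => N ω t) atTop (nhds 0)} = (∅ : Set Ω) := by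
    ext ω
    simp only [Set.mem_setOf_eq, Set.mem_empty_iff_false, iff_false]
    intro htend
    obtain ⟨T, hT⟩ := (htend.eventually_lt_const hK).exists_forall_of_atTop
    have hdouble : ∀ k, N ω (T + k) = 2^k * N ω T := by
      intro k
      induction k with
      | zero => simp
      | succ k ih =>
          have h1 : T + (k+1) = (T + k) + 1 := by omega
          rw [h1, hNrec, if_pos (hT (T+k) (by omega)), ih]
          ring
    obtain ⟨T2, hT2⟩ := (htend.eventually_lt_const (hNpos ω T)).exists_forall_of_atTop
    have h3 := hT2 (T + T2) (by omega)
    rw [hdouble T2] at h3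
    have h4 : (1:ℝ) ≤ 2 ^ T2 := one_le_pow₀ (by norm_num)
    nlinarith [hNpos ω T]
  -- setup for part 1
  set hh : ℤ := ⌈Real.logb 2 K⌉ with hhdef
  set T0 : ℕ := (l0 - hh).toNat with hT0def
  set nstar : ℕ := (hh - l0).toNat with hnstardef
  set sv : Ω → ℕ → ℤ := fun ω t => -⌊Real.logb 2 (ξ t ω)⌋ with hsvdef
  set G : Set Ω := ⋂ t : ℕ, (fun ω => Real.logb 2 (ξ t ω)) ⁻¹' (Set.range (Int.cast : ℤ → ℝ))
    with hGdef
  have hlogbmeas : Measurable (fun x : ℝ => Real.logb 2 x) := by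
    unfold Real.logb
    exact Real.measurable_log.div_const _
  have hGmeas : MeasurableSet G := by
    apply MeasurableSet.iInter
    intro t
    exact (hlogbmeas.comp (hmeas t)) (Set.countable_range _).measurableSet
  have hGae : ∀ᵐ ω ∂Pm, ω ∈ G := by
    have hall := ae_all_iff.2 hintlog
    filter_upwards [hall] with ω hω
    simp only [hGdef, Set.mem_iInter, Set.mem_preimage, Set.mem_range]
    intro t
    obtain ⟨mm, hm⟩ := hω t
    exact ⟨mm, hm.symm⟩
  have hGc : Pm Gᶜ = 0 := by
    rw [ae_iff] at hGae
    exact hGae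
  have hinterG : ∀ A : Set Ω, Pm (A ∩ G) = Pm A := by
    intro A
    apply le_antisymm (measure_mono Set.inter_subset_left)
    calc Pm A ≤ Pm ((A ∩ G) ∪ Gᶜ) := measure_mono (by
          intro ω hω
          by_cases hg : ω ∈ G
          · exact Or.inl ⟨hω, hg⟩
          · exact Or.inr hg)
      _ ≤ Pm (A ∩ G) + Pm Gᶜ := measure_union_le _ _
      _ = Pm (A ∩ G) := by rw [hGc, add_zero]
  have h2pos : (0:ℝ) < 2 := two_pos
  have hKpow : ∀ l : ℤ, K ≤ (2:ℝ)^l ↔ hh ≤ l := by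
    intro l
    rw [← Real.rpow_intCast 2 l,
      ← Real.logb_le_iff_le_rpow (by norm_num : (1:ℝ) < 2) hK, hhdef]
    exact Int.ceil_le.symm
  have hGfact : ∀ ω ∈ G, (∀ t, 1 ≤ sv ω t) ∧ (∀ t, ξ t ω = (2:ℝ)^(-(sv ω t))) := by
    intro ω hω
    have hξ : ∀ t, ξ t ω = (2:ℝ)^(-(sv ω t)) := by
      intro t
      have hmem := Set.mem_iInter.1 hω t
      obtain ⟨mm, hm⟩ := hmem
      have hm2 : (mm:ℝ) = Real.logb 2 (ξ t ω) := hm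
      have hsveq : sv ω t = -mm := by
        rw [hsvdef]
        simp only
        rw [← hm2, Int.floor_intCast]
      have h1 : ξ t ω = (2:ℝ) ^ (Real.logb 2 (ξ t ω)) :=
        (Real.rpow_logb h2pos (by norm_num) (hval t ω).1).symm
      rw [hsveq, neg_neg, h1, ← hm2, Real.rpow_intCast]
    refine ⟨fun t => ?_, hξ⟩
    have h1 : (2:ℝ)^(-(sv ω t)) < 2^(0:ℤ) := by
      rw [zpow_zero, ← hξ t]
      exact (hval t ω).2
    have h2 := (zpow_lt_zpow_iff_right₀ (by norm_num : (1:ℝ) < 2)).1 h1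
    omega
  have hNlev : ∀ ω ∈ G, ∀ t, N ω t = (2:ℝ)^(lev hh l0 (sv ω) t) := by
    intro ω hω t
    obtain ⟨hsv1, hξeq⟩ := hGfact ω hω
    induction t with
    | zero =>
        rw [hN0', lev_zero]
        calc N0 = (2:ℝ) ^ (Real.logb 2 N0) :=
              (Real.rpow_logb h2pos (by norm_num) hN0pos).symm
          _ = (2:ℝ) ^ ((l0:ℤ):ℝ) := by rw [hl0]
          _ = (2:ℝ) ^ l0 := Real.rpow_intCast 2 l0
    | succ t ih =>
        rw [hNrec]
        by_cases hc : N ω t < K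
        · have hlt : lev hh l0 (sv ω) t < hh := by
            by_contra hge
            push_neg at hge
            have := (hKpow _).2 hge
            rw [← ih] at this
            linarith
          rw [if_pos hc, ih, lev_succ_lt hlt, zpow_add_one₀ (by norm_num : (2:ℝ) ≠ 0)]
          ring
        · have hge : hh ≤ lev hh l0 (sv ω) t := by
            apply (hKpow _).1
            rw [← ih]
            linarith [not_lt.1 hc]
          rw [if_neg hc, ih, lev_succ_ge hge, hξeq t,
            ← zpow_add₀ (by norm_num : (2:ℝ) ≠ 0)]
          congr 1
          ring
  have hNmeas : ∀ t, Measurable fun ω => N ω t := by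
    intro t
    induction t with
    | zero =>
        have : (fun ω => N ω 0) = fun _ => N0 := funext fun ω => hN0' ω
        rw [this]; exact measurable_const
    | succ t ih =>
        have : (fun ω => N ω (t+1))
            = fun ω => if N ω t < K then 2 * N ω t else ξ t ω * N ω t :=
          funext fun ω => hNrec ω t
        rw [this]
        exact Measurable.ite (measurableSet_lt ih measurable_const)
          (ih.const_mul 2) ((hmeas t).mul ih)
  set C : ℕ → Set Ω := fun n => (fun ω => N ω n) ⁻¹' (Set.Ici K) with hCdef
  have hCmeas : ∀ n, MeasurableSet (C n) := fun n => (hNmeas n) measurableSet_Ici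
  have hCiff : ∀ ω ∈ G, ∀ n, (ω ∈ C n ↔ hh ≤ lev hh l0 (sv ω) n) := by
    intro ω hω n
    rw [hCdef]
    simp only [Set.mem_preimage, Set.mem_Ici]
    rw [hNlev ω hω n]
    exact hKpow _
  -- independence: N · n is a function of ξ_0 .. ξ_{n-1}
  have hNg : ∀ n, ∃ g : (Fin n → ℝ) → ℝ, Measurable g ∧ ∀ ω, N ω n = g (fun i => ξ i ω) := by
    intro n
    induction n with
    | zero => exact ⟨fun _ => N0, measurable_const, fun ω => hN0' ω⟩
    | succ n ih =>
        obtain ⟨g, hgm, hg⟩ := ih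
        refine ⟨fun v => if g (fun i => v i.castSucc) < K then 2 * g (fun i => v i.castSucc)
          else v (Fin.last n) * g (fun i => v i.castSucc), ?_, ?_⟩
        · have hres : Measurable fun (v : Fin (n+1) → ℝ) => g (fun i => v i.castSucc) :=
            hgm.comp (measurable_pi_lambda _ fun i => measurable_pi_apply _)
          exact Measurable.ite (measurableSet_lt hres measurable_const)
            (hres.const_mul 2) ((measurable_pi_apply _).mul hres)
        · intro ω
          rw [hNrec]
          have hco : (fun i : Fin n => (fun i : Fin (n+1) => ξ i ω) i.castSucc)
              = fun i : Fin n => ξ i ω := by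
            funext i
            simp [Fin.coe_castSucc]
          simp only [hco, ← hg ω, Fin.val_last]
  have hindepN : ∀ n, IndepFun (fun ω => N ω n) (ξ n) Pm := by
    intro n
    obtain ⟨g, hgm, hg⟩ := hNg n
    have hdisj : Disjoint (Finset.range n) ({n} : Finset ℕ) := by simp
    have hbase := hindep.indepFun_finset (Finset.range n) {n} hdisj hmeas
    set L : (↥(Finset.range n) → ℝ) → ℝ :=
      fun w => g (fun i : Fin n => w ⟨(i:ℕ), Finset.mem_range.2 i.isLt⟩) with hLdef
    set R : (↥({n} : Finset ℕ) → ℝ) → ℝ := fun w => w ⟨n, Finset.mem_singleton_self n⟩ with hRdef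
    have hL : Measurable L := hgm.comp (measurable_pi_lambda _ fun i => measurable_pi_apply _)
    have hR : Measurable R := measurable_pi_apply _
    have hcomp := hbase.comp hL hR
    have hfunL : (L ∘ fun a (i : (Finset.range n : Finset ℕ)) => ξ i a) = fun ω => N ω n := by
      funext ω
      simp only [Function.comp, hLdef]
      rw [hg ω]
    have hfunR : (R ∘ fun a (i : (({n} : Finset ℕ) : Finset ℕ)) => ξ i a) = ξ n := by
      funext ω
      simp only [Function.comp, hRdef]
    rw [hfunL, hfunR] at hcomp
    exact hcomp
  have hprodC : ∀ n (B : Set ℝ), MeasurableSet B →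
      Pm (C n ∩ ξ n ⁻¹' B) = Pm (C n) * Pm (ξ 0 ⁻¹' B) := by
    intro n B hB
    have h1 := (indepFun_iff_measure_inter_preimage_eq_mul.1 (hindepN n))
      (Set.Ici K) B measurableSet_Ici hB
    rw [hCdef]
    rw [h1]
    congr 1
    rw [← Measure.map_apply (hmeas n) hB, hident n, Measure.map_apply (hmeas 0) hB]
  have hidentB : ∀ j (B : Set ℝ), MeasurableSet B → Pm (ξ j ⁻¹' B) = Pm (ξ 0 ⁻¹' B) := by
    intro j B hB
    rw [← Measure.map_apply (hmeas j) hB, hident j, Measure.map_apply (hmeas 0) hB]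
  -- numeric sequences
  set rf : ℕ → ℝ≥0∞ := fun i => Pm (ξ 0 ⁻¹' {(2:ℝ)^(-(i:ℤ))}) with hrfdef
  set rF : ℕ → ℝ≥0∞ := fun k => Pm (ξ 0 ⁻¹' Set.Iio ((2:ℝ)^(-(k:ℤ)))) with hrFdef
  set f : ℕ → ℝ := fun i => (rf i).toReal with hfdef
  set F : ℕ → ℝ := fun k => (rF k).toReal with hFdef
  set u : ℕ → ℝ := fun n => (Pm (C n)).toReal with hudef
  set δd : ℕ → ℝ := fun n => T0 * F (n - T0 - 1) + (if n = nstar then 1 else 0) with hδddef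
  have hfinm : ∀ A : Set Ω, Pm A ≠ ⊤ := fun A => measure_ne_top Pm A
  have hf0 : ∀ i, 0 ≤ f i := fun i => ENNReal.toReal_nonneg
  have hF0 : ∀ k, 0 ≤ F k := fun k => ENNReal.toReal_nonneg
  have hu0 : ∀ n, 0 ≤ u n := fun n => ENNReal.toReal_nonneg
  have hu1 : ∀ n, u n ≤ 1 := by
    intro n
    rw [hudef]
    simp only
    rw [show (1:ℝ) = (1:ℝ≥0∞).toReal by simp]
    exact ENNReal.toReal_mono ENNReal.one_ne_top prob_le_one
  have hf00 : f 0 = 0 := by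
    have hrf00 : rf 0 = 0 := by
      have hempty : ξ 0 ⁻¹' {(2:ℝ)^(-((0:ℕ):ℤ))} = ∅ := by
        ext ω
        simp only [Set.mem_preimage, Set.mem_singleton_iff, Set.mem_empty_iff_false, iff_false]
        intro heq
        have h2 := (hval 0 ω).2
        rw [heq] at h2
        norm_num at h2
      rw [hrfdef]
      simp only
      rw [hempty, measure_empty]
    rw [hfdef]
    simp only
    rw [hrf00]
    simp
  -- f sums to 1
  have hdisjA : Pairwise (Function.onFun Disjoint fun i : ℕ => ξ 0 ⁻¹' {(2:ℝ)^(-(i:ℤ))}) := by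
    intro i j hij
    refine Set.disjoint_left.2 fun ω h1 h2 => ?_
    simp only [Set.mem_preimage, Set.mem_singleton_iff] at h1 h2
    rw [h1] at h2
    have := zpow_right_injective₀ (two_pos) (by norm_num : (2:ℝ) ≠ 1) h2
    omega
  have hPmG : Pm G = 1 := by
    have := hinterG Set.univ
    rw [Set.univ_inter] at this
    rw [this, measure_univ]
  have hsumrf : ∑' i, rf i = 1 := by
    have h1 : ∑' i, rf i = Pm (⋃ i : ℕ, ξ 0 ⁻¹' {(2:ℝ)^(-(i:ℤ))}) :=
      (measure_iUnion hdisjA (fun i => (hmeas 0) (measurableSet_singleton _))).symm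
    rw [h1]
    apply le_antisymm prob_le_one
    rw [← hPmG]
    apply measure_mono
    intro ω hω
    obtain ⟨hsv1, hξeq⟩ := hGfact ω hω
    refine Set.mem_iUnion.2 ⟨(sv ω 0).toNat, ?_⟩
    simp only [Set.mem_preimage, Set.mem_singleton_iff]
    rw [hξeq 0]
    congr 1
    have := hsv1 0
    omega
  have hfsum : Summable f := ENNReal.summable_toReal (by rw [hsumrf]; exact ENNReal.one_ne_top)
  have hftot : ∑' i, f i = 1 := by
    rw [hfdef]
    simp only
    rw [← ENNReal.tsum_toReal_eq (f := rf) (fun a => hfinm _), hsumrf]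
    simp
  have hFanti : Antitone F := by
    intro k l hkl
    apply ENNReal.toReal_mono (hfinm _)
    apply measure_mono
    apply Set.preimage_mono
    intro x hx
    simp only [Set.mem_Iio] at hx ⊢
    exact lt_of_lt_of_le hx (zpow_le_zpow_right₀ one_le_two (by omega))
  -- F tends to zero
  have hrF0 : Tendsto rF atTop (nhds 0) := by
    have hempty : ⋂ k : ℕ, ξ 0 ⁻¹' Set.Iio ((2:ℝ)^(-(k:ℤ))) = ∅ := by
      ext ω
      simp only [Set.mem_iInter, Set.mem_preimage, Set.mem_Iio, Set.mem_empty_iff_false,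
        iff_false, not_forall, not_lt]
      obtain ⟨k, hk⟩ := exists_pow_lt_of_lt_one (hval 0 ω).1 (by norm_num : (1:ℝ)/2 < 1)
      refine ⟨k, ?_⟩
      have : (2:ℝ)^(-(k:ℤ)) = (1/2:ℝ)^k := by
        rw [zpow_neg, zpow_natCast, one_div, inv_pow]
      rw [this]
      exact le_of_lt hk
    have hanti : Antitone fun k : ℕ => ξ 0 ⁻¹' Set.Iio ((2:ℝ)^(-(k:ℤ))) := by
      intro k l hkl
      apply Set.preimage_mono
      intro x hx
      simp only [Set.mem_Iio] at hx ⊢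
      exact lt_of_lt_of_le hx (zpow_le_zpow_right₀ one_le_two (by omega))
    have htd := tendsto_measure_iInter_atTop (μ := Pm)
      (s := fun k : ℕ => ξ 0 ⁻¹' Set.Iio ((2:ℝ)^(-(k:ℤ))))
      (fun k => ((hmeas 0) measurableSet_Iio).nullMeasurableSet) hanti ⟨0, hfinm _⟩
    rw [hempty, measure_empty] at htd
    exact htd
  have hFto0 : Tendsto F atTop (nhds 0) := by
    have h0 : Tendsto ENNReal.toReal (nhds 0) (nhds 0) := by
      simpa using (ENNReal.tendsto_toReal (a := 0) (by simp))
    exact h0.comp hrF0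
  have hδlim : Tendsto δd atTop (nhds 0) := by
    have h2 : Tendsto (fun n : ℕ => n - T0 - 1) atTop atTop := by
      apply tendsto_atTop_atTop.2
      intro b
      exact ⟨b + T0 + 1, fun a ha => by omega⟩
    have h1 : Tendsto (fun n => (T0:ℝ) * F (n - T0 - 1)) atTop (nhds 0) := by
      have := (hFto0.comp h2).const_mul (T0:ℝ)
      simpa using this
    have h3 : Tendsto (fun n => if n = nstar then (1:ℝ) else 0) atTop (nhds 0) := by
      have heq : (fun _ : ℕ => (0:ℝ)) =ᶠ[atTop] (fun n => if n = nstar then (1:ℝ) else 0) := by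
        filter_upwards [eventually_gt_atTop nstar] with n hn
        rw [if_neg (by omega)]
      exact Tendsto.congr' heq tendsto_const_nhds
    have := h1.add h3
    simpa using this
  -- non integrability gives divergence of the tails
  have hFdiv : ¬ Summable F := by
    intro hFsum
    have hSmeas : Measurable fun ω => Real.logb 2 (ξ 0 ω) := hlogbmeas.comp (hmeas 0)
    have hnotfin : ¬ HasFiniteIntegral (fun ω => Real.logb 2 (ξ 0 ω)) Pm :=
      fun hfi => hE ⟨hSmeas.aestronglyMeasurable, hfi⟩
    have htop : ∫⁻ ω, (‖Real.logb 2 (ξ 0 ω)‖₊ : ℝ≥0∞) ∂Pm = ⊤ := by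
      by_contra hne
      exact hnotfin (lt_top_iff_ne_top.2 hne)
    have hptwise : ∀ ω, (‖Real.logb 2 (ξ 0 ω)‖₊ : ℝ≥0∞)
        ≤ ∑' k : ℕ, (ξ 0 ⁻¹' Set.Iio ((2:ℝ)^(-(k:ℤ)))).indicator (fun _ => (1:ℝ≥0∞)) ω := by
      intro ω
      have hx0 : 0 < ξ 0 ω := (hval 0 ω).1
      have hx1 : ξ 0 ω < 1 := (hval 0 ω).2
      have hlneg : Real.logb 2 (ξ 0 ω) < 0 := Real.logb_neg (by norm_num) hx0 hx1
      have hnorm : (‖Real.logb 2 (ξ 0 ω)‖₊ : ℝ≥0∞)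
          = ENNReal.ofReal (-Real.logb 2 (ξ 0 ω)) := by
        rw [← enorm_eq_nnnorm, Real.enorm_eq_ofReal_abs, abs_of_neg hlneg]
      rw [hnorm]
      set S : ℝ := -Real.logb 2 (ξ 0 ω) with hSdef
      set M := ⌈S⌉₊ with hM
      have hmem : ∀ k : ℕ, k < M → ω ∈ ξ 0 ⁻¹' Set.Iio ((2:ℝ)^(-(k:ℤ))) := by
        intro k hk
        simp only [Set.mem_preimage, Set.mem_Iio]
        have hkS : (k:ℝ) < S := Nat.lt_ceil.1 hk
        have hlt : Real.logb 2 (ξ 0 ω) < -(k:ℝ) := by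
          rw [hSdef] at hkS
          linarith
        have h2 := (Real.logb_lt_iff_lt_rpow (by norm_num : (1:ℝ) < 2) hx0).1 hlt
        calc ξ 0 ω < (2:ℝ) ^ (-(k:ℝ)) := h2
          _ = (2:ℝ) ^ (-(k:ℤ)) := by
              rw [← Real.rpow_intCast]
              norm_num
      calc ENNReal.ofReal S ≤ (M : ℝ≥0∞) := by
            rw [← ENNReal.ofReal_natCast M]
            exact ENNReal.ofReal_le_ofReal (Nat.le_ceil S)
        _ = ∑ k ∈ Finset.range M,
              (ξ 0 ⁻¹' Set.Iio ((2:ℝ)^(-(k:ℤ)))).indicator (fun _ => (1:ℝ≥0∞)) ω := by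
            rw [Finset.sum_congr rfl (fun k hk =>
              Set.indicator_of_mem (hmem k (Finset.mem_range.1 hk)) _)]
            simp
        _ ≤ ∑' k : ℕ, (ξ 0 ⁻¹' Set.Iio ((2:ℝ)^(-(k:ℤ)))).indicator (fun _ => (1:ℝ≥0∞)) ω :=
            ENNReal.sum_le_tsum _
    have hint : (⊤:ℝ≥0∞) ≤ ∑' k : ℕ, rF k := by
      calc (⊤:ℝ≥0∞) = ∫⁻ ω, (‖Real.logb 2 (ξ 0 ω)‖₊ : ℝ≥0∞) ∂Pm := htop.symm
        _ ≤ ∫⁻ ω, ∑' k : ℕ, (ξ 0 ⁻¹' Set.Iio ((2:ℝ)^(-(k:ℤ)))).indicator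
              (fun _ => (1:ℝ≥0∞)) ω ∂Pm := lintegral_mono hptwise
        _ = ∑' k : ℕ, ∫⁻ ω, (ξ 0 ⁻¹' Set.Iio ((2:ℝ)^(-(k:ℤ)))).indicator
              (fun _ => (1:ℝ≥0∞)) ω ∂Pm :=
            lintegral_tsum (fun k =>
              (measurable_const.indicator ((hmeas 0) measurableSet_Iio)).aemeasurable)
        _ = ∑' k : ℕ, rF k := by
            refine tsum_congr fun k => ?_
            rw [lintegral_indicator_const ((hmeas 0) measurableSet_Iio), one_mul]
    have hne : ∑' k : ℕ, rF k ≠ ⊤ := by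
      have heq : ∀ k, rF k = ENNReal.ofReal (F k) := fun k =>
        (ENNReal.ofReal_toReal (hfinm _)).symm
      rw [tsum_congr heq, ← ENNReal.ofReal_tsum_of_nonneg hF0 hFsum]
      exact ENNReal.ofReal_ne_top
    exact hne (top_le_iff.1 hint)
  -- the renewal equation
  have hren : ∀ n, T0 + 2 ≤ n →
      |u n - ∑ j ∈ Finset.Ico T0 (n-1), u j * f (n-1-j)| ≤ δd n := by
    intro n hn
    set E : ℕ → Set Ω := fun j => C j ∩ ξ j ⁻¹' {(2:ℝ)^(-((n-1-j:ℕ):ℤ))} with hEdef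
    have hEmeas : ∀ j, MeasurableSet (E j) :=
      fun j => (hCmeas j).inter ((hmeas j) (measurableSet_singleton _))
    have hmemE : ∀ ω ∈ G, ∀ j, j + 2 ≤ n →
        (ω ∈ E j ↔ (hh ≤ lev hh l0 (sv ω) j ∧ sv ω j = (n:ℤ)-1-j)) := by
      intro ω hω j hj2
      obtain ⟨hs1, hξeq⟩ := hGfact ω hω
      rw [hEdef]
      simp only [Set.mem_inter_iff, Set.mem_preimage, Set.mem_singleton_iff]
      rw [hξeq j]
      constructor
      · rintro ⟨h1, h2⟩
        refine ⟨(hCiff ω hω j).1 h1, ?_⟩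
        have h3 := zpow_right_injective₀ (two_pos) (by norm_num : (2:ℝ) ≠ 1) h2
        omega
      · rintro ⟨h1, h2⟩
        refine ⟨(hCiff ω hω j).2 h1, ?_⟩
        congr 1
        omega
    have hEsub : ∀ j ∈ Finset.Ico T0 (n-1), E j ∩ G ⊆ C n := by
      intro j hj
      rw [Finset.mem_Ico] at hj
      rintro ω ⟨hωE, hωG⟩
      obtain ⟨hs1, _⟩ := hGfact ω hωG
      obtain ⟨hcr, hsveq⟩ := (hmemE ω hωG j (by omega)).1 hωE
      exact (hCiff ω hωG n).2 (lev_renewal_mem hs1 hj.1 (by omega) hcr hsveq)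
    have hEdisj : Set.PairwiseDisjoint ↑(Finset.Ico T0 (n-1)) (fun j => E j ∩ G) := by
      have haux : ∀ j j', T0 ≤ j → j < j' → j' + 2 ≤ n →
          ∀ ω, ω ∈ E j ∩ G → ω ∈ E j' ∩ G → False := by
        intro j j' hj hjj hj'2 ω ⟨hωE, hωG⟩ ⟨hωE', _⟩
        obtain ⟨hs1, _⟩ := hGfact ω hωG
        obtain ⟨hcr, hsveq⟩ := (hmemE ω hωG j (by omega)).1 hωE
        obtain ⟨hcr', _⟩ := (hmemE ω hωG j' hj'2).1 hωE'
        exact lev_last_crash_unique hs1 hj hjj (by omega) hcr hcr'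
      intro j hj j' hj' hne
      simp only [Finset.coe_Ico, Set.mem_Ico] at hj hj'
      rcases lt_or_gt_of_ne hne with hlt | hgt
      · exact Set.disjoint_left.2 fun ω h1 h2 => haux j j' hj.1 hlt (by omega) ω h1 h2
      · exact Set.disjoint_left.2 fun ω h1 h2 => haux j' j hj'.1 hgt (by omega) ω h2 h1
    have hUsub2 : C n ∩ G ⊆ (⋃ j ∈ Finset.Ico T0 (n-1), (E j ∩ G)) ∪
        ((⋃ j ∈ Finset.range T0, ξ j ⁻¹' Set.Iio ((2:ℝ)^(-((n-T0-1:ℕ):ℤ)))) ∪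
          (if n = nstar then Set.univ else (∅ : Set Ω))) := by
      rintro ω ⟨hωC, hωG⟩
      obtain ⟨hs1, hξeq⟩ := hGfact ω hωG
      have hcr : hh ≤ lev hh l0 (sv ω) n := (hCiff ω hωG n).1 hωC
      rcases lev_backward hs1 (show (l0 - hh).toNat + 2 ≤ n from hn) hcr with
        ⟨j, hj1, hj2, hj3, hj4⟩ | ⟨j, hj1, hj2, hj3⟩ | hstar
      · left
        refine Set.mem_biUnion (Finset.mem_Ico.2 ⟨hj1, by omega⟩) ⟨?_, hωG⟩
        exact (hmemE ω hωG j hj2).2 ⟨hj3, hj4⟩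
      · right; left
        refine Set.mem_biUnion (Finset.mem_range.2 hj1) ?_
        simp only [Set.mem_preimage, Set.mem_Iio]
        rw [hξeq j]
        apply zpow_lt_zpow_right₀ (by norm_num : (1:ℝ) < 2)
        omega
      · right; right
        rw [if_pos (show n = nstar by omega)]
        trivial
    have hEprod : ∀ j, Pm (E j) = Pm (C j) * rf (n-1-j) := by
      intro j
      rw [hEdef]
      exact hprodC j _ (measurableSet_singleton _)
    have hlow : ∑ j ∈ Finset.Ico T0 (n-1), Pm (C j) * rf (n-1-j) ≤ Pm (C n) := by
      calc ∑ j ∈ Finset.Ico T0 (n-1), Pm (C j) * rf (n-1-j)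
          = ∑ j ∈ Finset.Ico T0 (n-1), Pm (E j ∩ G) := by
            refine Finset.sum_congr rfl fun j hj => ?_
            rw [hinterG (E j), hEprod j]
        _ = Pm (⋃ j ∈ Finset.Ico T0 (n-1), (E j ∩ G)) :=
            (measure_biUnion_finset hEdisj (fun j _ => (hEmeas j).inter hGmeas)).symm
        _ ≤ Pm (C n) := measure_mono (Set.iUnion₂_subset hEsub)
    have hup : Pm (C n) ≤ (∑ j ∈ Finset.Ico T0 (n-1), Pm (C j) * rf (n-1-j)) +
        ((T0:ℝ≥0∞) * rF (n-T0-1) + (if n = nstar then 1 else 0)) := by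
      calc Pm (C n) = Pm (C n ∩ G) := (hinterG _).symm
        _ ≤ Pm ((⋃ j ∈ Finset.Ico T0 (n-1), (E j ∩ G)) ∪
            ((⋃ j ∈ Finset.range T0, ξ j ⁻¹' Set.Iio ((2:ℝ)^(-((n-T0-1:ℕ):ℤ)))) ∪
              (if n = nstar then Set.univ else (∅ : Set Ω)))) := measure_mono hUsub2
        _ ≤ Pm (⋃ j ∈ Finset.Ico T0 (n-1), (E j ∩ G)) +
            (Pm (⋃ j ∈ Finset.range T0, ξ j ⁻¹' Set.Iio ((2:ℝ)^(-((n-T0-1:ℕ):ℤ)))) +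
              Pm (if n = nstar then Set.univ else (∅ : Set Ω))) := by
            refine le_trans (measure_union_le _ _) ?_
            gcongr
            exact measure_union_le _ _
        _ ≤ (∑ j ∈ Finset.Ico T0 (n-1), Pm (C j) * rf (n-1-j)) +
            ((T0:ℝ≥0∞) * rF (n-T0-1) + (if n = nstar then 1 else 0)) := by
            gcongr
            · apply le_of_eq
              calc Pm (⋃ j ∈ Finset.Ico T0 (n-1), (E j ∩ G))
                  = ∑ j ∈ Finset.Ico T0 (n-1), Pm (E j ∩ G) :=
                    measure_biUnion_finset hEdisj (fun j _ => (hEmeas j).inter hGmeas)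
                _ = ∑ j ∈ Finset.Ico T0 (n-1), Pm (C j) * rf (n-1-j) := by
                    refine Finset.sum_congr rfl fun j _ => ?_
                    rw [hinterG (E j), hEprod j]
            · calc Pm (⋃ j ∈ Finset.range T0, ξ j ⁻¹' Set.Iio ((2:ℝ)^(-((n-T0-1:ℕ):ℤ))))
                  ≤ ∑ j ∈ Finset.range T0, Pm (ξ j ⁻¹' Set.Iio ((2:ℝ)^(-((n-T0-1:ℕ):ℤ)))) :=
                    measure_biUnion_finset_le _ _
                _ = ∑ _j ∈ Finset.range T0, rF (n-T0-1) := by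
                    refine Finset.sum_congr rfl fun j _ => ?_
                    rw [hidentB j _ measurableSet_Iio]
                _ = (T0:ℝ≥0∞) * rF (n-T0-1) := by
                    rw [Finset.sum_const, Finset.card_range, nsmul_eq_mul]
            · split_ifs
              · rw [measure_univ]
              · rw [measure_empty]
    -- convert to real numbers
    have hAfin : (∑ j ∈ Finset.Ico T0 (n-1), Pm (C j) * rf (n-1-j)) ≠ ⊤ :=
      (hlow.trans_lt (measure_lt_top Pm (C n))).ne
    have hAto : (∑ j ∈ Finset.Ico T0 (n-1), Pm (C j) * rf (n-1-j)).toReal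
        = ∑ j ∈ Finset.Ico T0 (n-1), u j * f (n-1-j) := by
      rw [ENNReal.toReal_sum (fun j _ => ENNReal.mul_ne_top (hfinm _) (hfinm _))]
      exact Finset.sum_congr rfl fun j hj => by rw [ENNReal.toReal_mul]
    have h1 : ∑ j ∈ Finset.Ico T0 (n-1), u j * f (n-1-j) ≤ u n := by
      rw [← hAto]
      exact ENNReal.toReal_mono (hfinm _) hlow
    have h2 : u n ≤ ∑ j ∈ Finset.Ico T0 (n-1), u j * f (n-1-j) + δd n := by
      have hBfin : ((T0:ℝ≥0∞) * rF (n-T0-1) + (if n = nstar then 1 else 0)) ≠ ⊤ := by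
        apply ENNReal.add_ne_top.2
        constructor
        · exact ENNReal.mul_ne_top (by simp) (hfinm _)
        · split_ifs <;> simp
      have h3 := ENNReal.toReal_mono (by
        exact ENNReal.add_ne_top.2 ⟨hAfin, hBfin⟩) hup
      rw [ENNReal.toReal_add hAfin hBfin, hAto] at h3
      have h4 : ((T0:ℝ≥0∞) * rF (n-T0-1) + (if n = nstar then 1 else 0)).toReal = δd n := by
        rw [hδddef]
        rw [ENNReal.toReal_add (ENNReal.mul_ne_top (by simp) (hfinm _)) (by split_ifs <;> simp),
          ENNReal.toReal_mul, ENNReal.toReal_natCast]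
        have hif : ((if n = nstar then (1:ℝ≥0∞) else 0)).toReal
            = (if n = nstar then (1:ℝ) else 0) := by split_ifs <;> simp
        rw [hif]
      rw [h4] at h3
      exact h3
    have hδ0 : 0 ≤ δd n := by
      rw [hδddef]
      have := hF0 (n - T0 - 1)
      positivity
    rw [abs_le]
    exact ⟨by linarith, by linarith⟩
  -- the disjointness bound
  have hlast : ∀ t, ∑ j ∈ Finset.Ico T0 (t-1), u j * F (t-2-j) ≤ 1 := by
    intro t
    set D : ℕ → Set Ω := fun j =>
      (C j ∩ ξ j ⁻¹' Set.Iio ((2:ℝ)^(-((t-2-j:ℕ):ℤ)))) ∩ G with hDdef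
    have hDmeas : ∀ j, MeasurableSet (D j) :=
      fun j => ((hCmeas j).inter ((hmeas j) measurableSet_Iio)).inter hGmeas
    have hDdisj : Set.PairwiseDisjoint ↑(Finset.Ico T0 (t-1)) D := by
      have haux : ∀ j j', T0 ≤ j → j < j' → j' + 2 ≤ t →
          ∀ ω, ω ∈ D j → ω ∈ D j' → False := by
        intro j j' hj hjj hj'2 ω ⟨⟨hωC, hωI⟩, hωG⟩ ⟨⟨hωC', _⟩, _⟩
        obtain ⟨hs1, hξeq⟩ := hGfact ω hωG
        simp only [Set.mem_preimage, Set.mem_Iio] at hωI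
        rw [hξeq j] at hωI
        have hlt := (zpow_lt_zpow_iff_right₀ (by norm_num : (1:ℝ) < 2)).1 hωI
        have hcr := (hCiff ω hωG j).1 hωC
        have hcr' := (hCiff ω hωG j').1 hωC'
        exact lev_last_crash_unique hs1 hj hjj (by omega) hcr hcr'
      intro j hj j' hj' hne
      simp only [Finset.coe_Ico, Set.mem_Ico] at hj hj'
      rcases lt_or_gt_of_ne hne with hlt | hgt
      · exact Set.disjoint_left.2 fun ω h1 h2 => haux j j' hj.1 hlt (by omega) ω h1 h2
      · exact Set.disjoint_left.2 fun ω h1 h2 => haux j' j hj'.1 hgt (by omega) ω h2 h1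
    have hterm : ∀ j, u j * F (t-2-j) = (Pm (D j)).toReal := by
      intro j
      rw [hDdef]
      rw [hinterG, hprodC j _ measurableSet_Iio, ENNReal.toReal_mul]
    calc ∑ j ∈ Finset.Ico T0 (t-1), u j * F (t-2-j)
        = ∑ j ∈ Finset.Ico T0 (t-1), (Pm (D j)).toReal := by
          exact Finset.sum_congr rfl fun j _ => hterm j
      _ = (∑ j ∈ Finset.Ico T0 (t-1), Pm (D j)).toReal :=
          (ENNReal.toReal_sum (fun j _ => hfinm _)).symm
      _ = (Pm (⋃ j ∈ Finset.Ico T0 (t-1), D j)).toReal := by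
          rw [measure_biUnion_finset hDdisj (fun j _ => hDmeas j)]
      _ ≤ 1 := by
          rw [show (1:ℝ) = (1:ℝ≥0∞).toReal by simp]
          exact ENNReal.toReal_mono ENNReal.one_ne_top prob_le_one
  -- conclude using the abstract renewal lemma
  have humain : Tendsto u atTop (nhds 0) :=
    renewal_tendsto_zero f F u δd T0 hf0 hf00 hfsum hftot hu0 hu1 hF0 hFanti hFdiv
      hδlim hren hlast
  have hCten : Tendsto (fun n => Pm (C n)) atTop (nhds (0:ℝ≥0∞)) := by
    have h1 : Tendsto (fun n => ENNReal.ofReal (u n)) atTop (nhds (ENNReal.ofReal 0)) :=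
      ENNReal.tendsto_ofReal humain
    simp only [ENNReal.ofReal_zero] at h1
    exact h1.congr fun n => ENNReal.ofReal_toReal (hfinm _)
  constructor
  · intro x
    set m := (hh - x).toNat with hmdef
    have hsub : ∀ t, T0 ≤ t →
        {ω | (x:ℝ) < Real.logb 2 (N ω t)} ∩ G ⊆ ⋃ i ∈ Finset.range m, C (t+i) := by
      intro t ht
      rintro ω ⟨hωx, hωG⟩
      obtain ⟨hs1, _⟩ := hGfact ω hωG
      have hlev : Real.logb 2 (N ω t) = ((lev hh l0 (sv ω) t : ℤ) : ℝ) := by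
        rw [hNlev ω hωG t, ← Real.rpow_intCast,
          Real.logb_rpow (by norm_num : (0:ℝ) < 2) (by norm_num : (2:ℝ) ≠ 1)]
      rw [Set.mem_setOf_eq, hlev] at hωx
      have hxlt : x < lev hh l0 (sv ω) t := by exact_mod_cast hωx
      obtain ⟨i, hi1, hi2⟩ := lev_target hs1 (show (l0 - hh).toNat ≤ t from ht) hxlt
      have him : i < m := by rw [hmdef]; omega
      refine Set.mem_biUnion (Finset.mem_range.2 him) ?_
      exact (hCiff ω hωG (t+i)).2 (le_of_eq hi2.symm)
    refine tendsto_of_tendsto_of_tendsto_of_le_of_le'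
      (g := fun _ : ℕ => (0:ℝ≥0∞))
      (h := fun t => ∑ i ∈ Finset.range m, Pm (C (t+i)))
      tendsto_const_nhds ?_ ?_ ?_
    · have := tendsto_finset_sum (Finset.range m)
        (fun i (_ : i ∈ Finset.range m) => hCten.comp (tendsto_add_atTop_nat i))
      simpa using this
    · exact Eventually.of_forall fun t => zero_le
    · filter_upwards [eventually_ge_atTop T0] with t ht
      calc Pm {ω | (x:ℝ) < Real.logb 2 (N ω t)}
          = Pm ({ω | (x:ℝ) < Real.logb 2 (N ω t)} ∩ G) := (hinterG _).symm
        _ ≤ Pm (⋃ i ∈ Finset.range m, C (t+i)) := measure_mono (hsub t ht)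
        _ ≤ ∑ i ∈ Finset.range m, Pm (C (t+i)) := measure_biUnion_finset_le _ _
  · rw [hpart2, measure_empty]
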